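/- Let X_n ⊆ {0,1}^D be a set of n pairwise distinct binary vectors. Then there exist an enumeration x^0, …, x^{n−1} of X_n, a threshold layer from {0,1}^D to {0,1}^n, and a threshold layer from {0,1}^n to {0,1}^{⌈log₂ n⌉}, such that their composition maps x^i to i2b_{⌈log₂ n⌉}(i), the ⌈log₂ n⌉-bit binary representation of i, for every i = 0, …, n−1. -/

import Mathlib

/-- A Boolean threshold function: there are integer weights `a` and an integer
threshold `θ` such that `f x = 1` iff `∑ i, a i * x i ≥ θ` (bits as integers 0/1). -/
def IsThresholdFun {ι : Type*} [Fintype ι] (f : (ι → Bool) → Bool) : Prop :=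
  ∃ (a : ι → ℤ) (θ : ℤ), ∀ x, f x = decide (θ ≤ ∑ i, a i * (if x i then 1 else 0))

/-- A threshold layer: each coordinate function is a Boolean threshold function. -/
def IsThresholdLayer {ι κ : Type*} [Fintype ι] (F : (ι → Bool) → (κ → Bool)) : Prop :=
  ∀ j, IsThresholdFun (fun x => F x j)

/-- The step vector `h^i[s]`: coordinate `j` is 1 iff `j ≤ i`. -/
def stepVec (s i : ℕ) : Fin s → Bool := fun j => decide (j.val ≤ i)

/-- `i2b d j`: the `d`-bit binary representation of `j`. -/
def i2b (d j : ℕ) : Fin d → Bool := fun k => j.testBit k.val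

/-- Integer dot product of a weight vector with a bit vector. -/
def dotInt {ι : Type*} [Fintype ι] (a : ι → ℤ) (x : ι → Bool) : ℤ :=
  ∑ i, a i * (if x i then 1 else 0)

namespace S10

def val {D : ℕ} (v : Fin D → Bool) : ℕ :=
  ∑ k : Fin D, (if v k then 1 else 0) * 2 ^ (k : ℕ)

lemma val_eq {D : ℕ} (v : Fin D → Bool) :
    val v = (finFunctionFinEquiv (fun k => if v k then (1 : Fin 2) else 0) : ℕ) := by
  rw [finFunctionFinEquiv_apply, val]
  refine Finset.sum_congr rfl fun k _ => ?_
  by_cases h : v k <;> simp [h]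

lemma val_injective {D : ℕ} : Function.Injective (val (D := D)) := by
  intro v w h
  rw [val_eq, val_eq] at h
  have := finFunctionFinEquiv.injective (Fin.val_injective (by exact_mod_cast h))
  funext k
  have := congrFun this k
  by_cases hv : v k <;> by_cases hw : w k <;> simp_all

lemma dot_val {D : ℕ} (v : Fin D → Bool) :
    (∑ k : Fin D, (2:ℤ)^(k:ℕ) * (if v k then 1 else 0)) = (val v : ℤ) := by
  rw [val]
  push_cast
  refine Finset.sum_congr rfl fun k _ => ?_
  by_cases h : v k <;> simp [h, mul_comm]

def Sb (j k : ℕ) : ℤ := if Nat.testBit j k then 1 else 0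

def aw (n : ℕ) (k : ℕ) (j : Fin n) : ℤ :=
  Sb j k - (if (j : ℕ) = 0 then 0 else Sb ((j:ℕ) - 1) k)

lemma telescope (k : ℕ) : ∀ i : ℕ,
    (∑ j ∈ Finset.range (i+1), (Sb j k - (if j = 0 then 0 else Sb (j-1) k))) = Sb i k := by
  intro i
  induction i with
  | zero => simp
  | succ m ih => rw [Finset.sum_range_succ, ih]; simp

lemma dot_step {n : ℕ} (k : ℕ) (i : Fin n) :
    (∑ j : Fin n, aw n k j * (if (stepVec n i) j then 1 else 0)) = Sb i k := by
  have h1 : (∑ j : Fin n, aw n k j * (if (stepVec n i) j then 1 else 0))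
      = ∑ j ∈ Finset.range n, (if j ≤ (i:ℕ) then (Sb j k - (if j = 0 then 0 else Sb (j-1) k)) else 0) := by
    rw [Finset.sum_range fun j => _]
    refine Finset.sum_congr rfl fun j _ => ?_
    by_cases h : (j:ℕ) ≤ (i:ℕ) <;> simp [stepVec, aw, h]
  rw [h1, ← Finset.sum_subset (Finset.range_subset_range.mpr (Nat.succ_le_of_lt i.isLt))
    (fun j _ hj => by rw [Finset.mem_range, Nat.lt_succ_iff, not_le] at hj; rw [if_neg (by omega)])]
  rw [Finset.sum_congr rfl fun j hj => if_pos (Nat.lt_succ_iff.mp (Finset.mem_range.mp hj))]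
  exact telescope k i

end S10

/-- there are an enumeration of `X_n` and a three-layer BTN with `n`
hidden nodes mapping `x^i` to the `⌈log₂ n⌉`-bit binary representation of `i`. -/
theorem stmt_10 (D n : ℕ) (X : Finset (Fin D → Bool)) (hX : X.card = n) :
    ∃ x : Fin n → Fin D → Bool, Function.Injective x ∧ (∀ i, x i ∈ X) ∧
      ∃ (F : (Fin D → Bool) → (Fin n → Bool))
        (G : (Fin n → Bool) → (Fin (Nat.clog 2 n) → Bool)),
        IsThresholdLayer F ∧ IsThresholdLayer G ∧
        ∀ i : Fin n, G (F (x i)) = i2b (Nat.clog 2 n) i.val := by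
  classical
  set r : (Fin D → Bool) → (Fin D → Bool) → Prop := fun a b => S10.val a ≤ S10.val b with hr
  haveI : DecidableRel r := fun a b => by rw [hr]; infer_instance
  haveI : IsTotal _ r := ⟨fun a b => le_total _ _⟩
  haveI : IsTrans _ r := ⟨fun a b c => le_trans⟩
  haveI : IsAntisymm _ r := ⟨fun a b h1 h2 => S10.val_injective (le_antisymm h1 h2)⟩
  set l := X.sort r with hl
  have hlen : l.length = n := by rw [hl, Finset.length_sort, hX]
  set x : Fin n → Fin D → Bool := fun i => l.get (Fin.cast hlen.symm i) with hx
  have hinj : Function.Injective x := by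
    intro i j h
    have h2 := (List.nodup_iff_injective_get.mp (X.sort_nodup r)) h
    exact Fin.ext (show (i:ℕ) = (j:ℕ) from congrArg Fin.val (congrArg (Fin.cast hlen) h2))

  have hmono : StrictMono fun i : Fin n => S10.val (x i) := by
    intro i j hij
    have hle : r (x i) (x j) :=
      (X.pairwise_sort r).rel_get_of_lt (by simpa using hij)
    refine lt_of_le_of_ne hle fun h => ?_
    exact absurd (hinj (S10.val_injective h)) (ne_of_lt hij)
  refine ⟨x, hinj, fun i => (Finset.mem_sort r).mp (l.get_mem _), ?_⟩
  refine ⟨fun v j => decide ((S10.val (x j) : ℤ) ≤ ∑ k : Fin D, (2:ℤ)^(k:ℕ) * (if v k then 1 else 0)),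
    fun y k => decide (1 ≤ ∑ j : Fin n, S10.aw n k j * (if y j then 1 else 0)), ?_, ?_, ?_⟩
  · exact fun j => ⟨fun k => (2:ℤ)^(k:ℕ), S10.val (x j), fun v => rfl⟩
  · exact fun k => ⟨S10.aw n k, 1, fun y => rfl⟩
  · intro i
    have hstep : (fun j => decide ((S10.val (x j) : ℤ) ≤
        ∑ k : Fin D, (2:ℤ)^(k:ℕ) * (if x i k then 1 else 0))) = stepVec n i := by
      funext j
      rw [S10.dot_val, stepVec, decide_eq_decide, Nat.cast_le, hmono.le_iff_le]
      exact ⟨fun h => h, fun h => h⟩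
    show (fun y (k : Fin (Nat.clog 2 n)) => decide (1 ≤ ∑ j : Fin n, S10.aw n k j * (if y j then 1 else 0)))
      (fun j => decide ((S10.val (x j) : ℤ) ≤ ∑ k : Fin D, (2:ℤ)^(k:ℕ) * (if x i k then 1 else 0))) = _
    rw [hstep]
    funext k
    show decide (1 ≤ ∑ j : Fin n, S10.aw n k j * (if stepVec n i j then 1 else 0)) = _
    rw [S10.dot_step]
    rw [i2b, S10.Sb]
    cases h : Nat.testBit i.val k.val <;> simp [h]
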